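/- In a local hidden variable model, the original Bell inequality holds: if joint probability distributions P_{(a_i,b_k)} on [−1,1]² (i,k = 1,2) factorize as P_{(a_i,b_k)}(λ_a, λ_b) = ∫_Ω P_{a_i}(λ_a|ω) P_{b_k}(λ_b|ω) ν(dω) and the perfect correlation condition ⟨λ_{a_2} λ_{b_1}⟩ = 1 holds, then |⟨λ_{a_1} λ_{b_1}⟩ − ⟨λ_{a_1} λ_{b_2}⟩| + ⟨λ_{a_2} λ_{b_2}⟩ ≤ 1. -/
import Mathlib


open MeasureTheory


lemma bell_pointwise {a b c d : ℝ} (ha : |a| ≤ 1) (hb : |b| ≤ 1) (hc : |c| ≤ 1)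
    (hd : |d| ≤ 1) (h : c * b = 1) : |a * b - a * d| + c * d ≤ 1 := by
  rw [abs_le] at ha hb hc hd
  have hsq : (b - c) ^ 2 = 0 := by
    refine le_antisymm ?_ (sq_nonneg _)
    nlinarith [mul_nonneg (by linarith : (0:ℝ) ≤ 1 - b) (by linarith : (0:ℝ) ≤ 1 + b),
      mul_nonneg (by linarith : (0:ℝ) ≤ 1 - c) (by linarith : (0:ℝ) ≤ 1 + c)]
  have hbc : b = c := by
    have := pow_eq_zero_iff (n := 2) (by norm_num) |>.mp hsq
    linarith
  subst hbc
  have h1 : (b - 1) * (b + 1) = 0 := by linear_combination h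
  rcases mul_eq_zero.mp h1 with h2 | h2
  · have hb1 : b = 1 := by linarith
    subst hb1
    rcases abs_cases (a * 1 - a * d) with ⟨he, _⟩ | ⟨he, _⟩ <;> rw [he] <;>
      nlinarith [mul_nonneg (by linarith : (0:ℝ) ≤ 1 - a) (by linarith : (0:ℝ) ≤ 1 - d),
        mul_nonneg (by linarith : (0:ℝ) ≤ 1 + a) (by linarith : (0:ℝ) ≤ 1 - d)]
  · have hb1 : b = -1 := by linarith
    subst hb1
    rcases abs_cases (a * (-1) - a * d) with ⟨he, _⟩ | ⟨he, _⟩ <;> rw [he] <;>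
      nlinarith [mul_nonneg (by linarith : (0:ℝ) ≤ 1 - a) (by linarith : (0:ℝ) ≤ 1 + d),
        mul_nonneg (by linarith : (0:ℝ) ≤ 1 + a) (by linarith : (0:ℝ) ≤ 1 + d)]


/-- The original Bell inequality in a local hidden variable model.  Outcomes
take finitely many values `val x ∈ [−1,1]`; the joint distributions
`P i k x y = ∫ Pa i x ω · Pb k y ω dν(ω)` factorize via local response
distributions `Pa`, `Pb` (indices `0,1` correspond to `a₁,a₂` and `b₁,b₂`).
If the perfect correlation condition `⟨λ_{a₂} λ_{b₁}⟩ = 1` holds, then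
`|⟨λ_{a₁} λ_{b₁}⟩ − ⟨λ_{a₁} λ_{b₂}⟩| + ⟨λ_{a₂} λ_{b₂}⟩ ≤ 1`. -/
theorem stmt_16 {Ω : Type*} [MeasurableSpace Ω] (ν : Measure Ω)
    [IsProbabilityMeasure ν]
    {ι : Type*} [Fintype ι] (val : ι → ℝ)
    (hval : ∀ x, val x ∈ Set.Icc (-1 : ℝ) 1)
    (Pa Pb : Fin 2 → ι → Ω → ℝ)
    (hPam : ∀ i x, Measurable (Pa i x)) (hPbm : ∀ k y, Measurable (Pb k y))
    (hPa0 : ∀ i x ω, 0 ≤ Pa i x ω) (hPb0 : ∀ k y ω, 0 ≤ Pb k y ω)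
    (hPa1 : ∀ i ω, ∑ x, Pa i x ω = 1) (hPb1 : ∀ k ω, ∑ y, Pb k y ω = 1)
    (P : Fin 2 → Fin 2 → ι → ι → ℝ)
    (hP : ∀ i k x y, P i k x y = ∫ ω, Pa i x ω * Pb k y ω ∂ν)
    (E : Fin 2 → Fin 2 → ℝ)
    (hE : ∀ i k, E i k = ∑ x, ∑ y, val x * val y * P i k x y)
    (hperf : E 1 0 = 1) :
    |E 0 0 - E 0 1| + E 1 1 ≤ 1 := by
  classical
  have hvala : ∀ x, |val x| ≤ 1 := fun x => abs_le.mpr ⟨(hval x).1, (hval x).2⟩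
  set A : Fin 2 → Ω → ℝ := fun i ω => ∑ x, val x * Pa i x ω with hAdef
  set B : Fin 2 → Ω → ℝ := fun k ω => ∑ y, val y * Pb k y ω with hBdef
  have hAm : ∀ i, Measurable (A i) := fun i =>
    Finset.measurable_sum _ fun x _ => (hPam i x).const_mul (val x)
  have hBm : ∀ k, Measurable (B k) := fun k =>
    Finset.measurable_sum _ fun y _ => (hPbm k y).const_mul (val y)
  have hAb : ∀ i ω, |A i ω| ≤ 1 := by
    intro i ω
    calc |A i ω| ≤ ∑ x, |val x * Pa i x ω| := Finset.abs_sum_le_sum_abs _ _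
      _ ≤ ∑ x, Pa i x ω := Finset.sum_le_sum fun x _ => by
          rw [abs_mul, abs_of_nonneg (hPa0 i x ω)]
          exact mul_le_of_le_one_left (hPa0 i x ω) (hvala x)
      _ = 1 := hPa1 i ω
  have hBb : ∀ k ω, |B k ω| ≤ 1 := by
    intro k ω
    calc |B k ω| ≤ ∑ y, |val y * Pb k y ω| := Finset.abs_sum_le_sum_abs _ _
      _ ≤ ∑ y, Pb k y ω := Finset.sum_le_sum fun y _ => by
          rw [abs_mul, abs_of_nonneg (hPb0 k y ω)]
          exact mul_le_of_le_one_left (hPb0 k y ω) (hvala y)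
      _ = 1 := hPb1 k ω
  -- generic integrability of bounded measurable products
  have hintb : ∀ (f : Ω → ℝ), Measurable f → (∀ ω, |f ω| ≤ 1) → Integrable f ν := by
    intro f hf hfb
    exact (integrable_const (1:ℝ)).mono' hf.aestronglyMeasurable
      (ae_of_all _ fun ω => by simpa [Real.norm_eq_abs] using hfb ω)
  have hIAB : ∀ i k, Integrable (fun ω => A i ω * B k ω) ν := by
    intro i k
    refine hintb _ ((hAm i).mul (hBm k)) fun ω => ?_
    rw [abs_mul]
    exact mul_le_one₀ (hAb i ω) (abs_nonneg _) (hBb k ω)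
  have hterm : ∀ i k (x y : ι),
      Integrable (fun ω => (val x * Pa i x ω) * (val y * Pb k y ω)) ν := by
    intro i k x y
    have hPab : ∀ ω, |val x * Pa i x ω| ≤ 1 := by
      intro ω
      rw [abs_mul, abs_of_nonneg (hPa0 i x ω)]
      refine mul_le_one₀ (hvala x) (hPa0 i x ω) ?_
      calc Pa i x ω ≤ ∑ x', Pa i x' ω :=
            Finset.single_le_sum (fun x' _ => hPa0 i x' ω) (Finset.mem_univ x)
        _ = 1 := hPa1 i ω
    have hPbb : ∀ ω, |val y * Pb k y ω| ≤ 1 := by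
      intro ω
      rw [abs_mul, abs_of_nonneg (hPb0 k y ω)]
      refine mul_le_one₀ (hvala y) (hPb0 k y ω) ?_
      calc Pb k y ω ≤ ∑ y', Pb k y' ω :=
            Finset.single_le_sum (fun y' _ => hPb0 k y' ω) (Finset.mem_univ y)
        _ = 1 := hPb1 k ω
    refine hintb _ (((hPam i x).const_mul _).mul ((hPbm k y).const_mul _)) fun ω => ?_
    rw [abs_mul]
    exact mul_le_one₀ (hPab ω) (abs_nonneg _) (hPbb ω)
  have hE' : ∀ i k, E i k = ∫ ω, A i ω * B k ω ∂ν := by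
    intro i k
    rw [hE]
    have h1 : ∀ x y : ι, val x * val y * P i k x y
        = ∫ ω, (val x * Pa i x ω) * (val y * Pb k y ω) ∂ν := by
      intro x y
      rw [hP, ← integral_const_mul]
      exact integral_congr_ae (ae_of_all _ fun ω => by ring)
    calc ∑ x, ∑ y, val x * val y * P i k x y
        = ∑ x, ∫ ω, ∑ y, (val x * Pa i x ω) * (val y * Pb k y ω) ∂ν := by
          refine Finset.sum_congr rfl fun x _ => ?_
          rw [integral_finset_sum _ fun y _ => hterm i k x y]
          exact Finset.sum_congr rfl fun y _ => h1 x y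
      _ = ∫ ω, ∑ x, ∑ y, (val x * Pa i x ω) * (val y * Pb k y ω) ∂ν := by
          rw [integral_finset_sum _
            fun x _ => integrable_finset_sum _ fun y _ => hterm i k x y]
      _ = ∫ ω, A i ω * B k ω ∂ν := by
          refine integral_congr_ae (ae_of_all _ fun ω => ?_)
          rw [hAdef, hBdef]
          exact (Finset.sum_mul_sum _ _ _ _).symm
  -- perfect correlation gives A 1 * B 0 = 1 a.e.
  have h10 : ∀ᵐ ω ∂ν, A 1 ω * B 0 ω = 1 := by
    have hzero : ∫ ω, (1 - A 1 ω * B 0 ω) ∂ν = 0 := by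
      rw [integral_sub (integrable_const 1) (hIAB 1 0), integral_const]
      have : ∫ ω, A 1 ω * B 0 ω ∂ν = 1 := (hE' 1 0).symm.trans hperf
      simp [this]
    have hnn : 0 ≤ᵐ[ν] fun ω => 1 - A 1 ω * B 0 ω := ae_of_all _ fun ω => by
      have h1 : |A 1 ω * B 0 ω| ≤ 1 := by
        rw [abs_mul]; exact mul_le_one₀ (hAb 1 ω) (abs_nonneg _) (hBb 0 ω)
      have := (abs_le.mp h1).2
      simp only [Pi.zero_apply]
      linarith
    have := (integral_eq_zero_iff_of_nonneg_ae hnn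
      ((integrable_const 1).sub (hIAB 1 0))).mp hzero
    filter_upwards [this] with ω h
    have : (1 : ℝ) - A 1 ω * B 0 ω = 0 := h
    linarith
  -- assemble
  have hdiff : E 0 0 - E 0 1 = ∫ ω, (A 0 ω * B 0 ω - A 0 ω * B 1 ω) ∂ν := by
    rw [hE' 0 0, hE' 0 1, integral_sub (hIAB 0 0) (hIAB 0 1)]
  have habs : |E 0 0 - E 0 1| ≤ ∫ ω, |A 0 ω * B 0 ω - A 0 ω * B 1 ω| ∂ν := by
    rw [hdiff]
    simpa [Real.norm_eq_abs] using
      norm_integral_le_integral_norm (μ := ν) (fun ω => A 0 ω * B 0 ω - A 0 ω * B 1 ω)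
  have hintf : Integrable (fun ω => |A 0 ω * B 0 ω - A 0 ω * B 1 ω| + A 1 ω * B 1 ω) ν :=
    (((hIAB 0 0).sub (hIAB 0 1)).abs).add (hIAB 1 1)
  have hmono : ∫ ω, (|A 0 ω * B 0 ω - A 0 ω * B 1 ω| + A 1 ω * B 1 ω) ∂ν ≤ 1 := by
    have hle : ∀ᵐ ω ∂ν, (|A 0 ω * B 0 ω - A 0 ω * B 1 ω| + A 1 ω * B 1 ω) ≤ 1 := by
      filter_upwards [h10] with ω h
      exact bell_pointwise (hAb 0 ω) (hBb 0 ω) (hAb 1 ω) (hBb 1 ω) h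
    calc ∫ ω, (|A 0 ω * B 0 ω - A 0 ω * B 1 ω| + A 1 ω * B 1 ω) ∂ν
        ≤ ∫ _ω, (1:ℝ) ∂ν := integral_mono_ae hintf (integrable_const 1) hle
      _ = 1 := by simp
  have hsplit : ∫ ω, (|A 0 ω * B 0 ω - A 0 ω * B 1 ω| + A 1 ω * B 1 ω) ∂ν
      = (∫ ω, |A 0 ω * B 0 ω - A 0 ω * B 1 ω| ∂ν) + ∫ ω, A 1 ω * B 1 ω ∂ν :=
    integral_add (((hIAB 0 0).sub (hIAB 0 1)).abs) (hIAB 1 1)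
  rw [hE' 1 1]
  linarith [hmono, hsplit ▸ hmono, habs, hsplit]
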